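/- Let p ≥ 2 be an integer, 0 < κ < 1, and S_i = ⌊(i+1)^{1/κ-1}⌋. Define m₀(n) = ∏_{i=0}^{n-2}(p^{S_i}+p-1). Suppose n(m) is chosen so that m₀(n) < m ≤ m₀(n+1)·(p^{S_{n-1}}+p-1) for a sequence m → ∞ (i.e. wt(v_{n-1}) < m ≤ wt(v_n)). Then n ≤ ((1+o(1))/(κ·ln p) · ln m)^κ as m → ∞. -/

import Mathlib

open Filter

private lemma rpow_step (q : ℝ) (hq : 1 ≤ q) (N : ℕ) :
    ((N : ℝ) + 1) ^ q - (N : ℝ) ^ q ≤ q * ((N : ℝ) + 1) ^ (q - 1) := by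
  have hN1 : (0 : ℝ) < (N : ℝ) + 1 := by positivity
  have hs : (-1 : ℝ) ≤ -(1 / ((N : ℝ) + 1)) := by
    rw [neg_le_neg_iff, div_le_one hN1]
    linarith [Nat.cast_nonneg (α := ℝ) N]
  have hb := one_add_mul_self_le_rpow_one_add hs hq
  have h1 : (1 : ℝ) + -(1 / ((N : ℝ) + 1)) = (N : ℝ) / ((N : ℝ) + 1) := by
    field_simp
    ring
  rw [h1] at hb
  have hb2 := mul_le_mul_of_nonneg_right hb (Real.rpow_nonneg hN1.le q)
  have hmul : ((N : ℝ) / ((N : ℝ) + 1)) ^ q * ((N : ℝ) + 1) ^ q = (N : ℝ) ^ q := by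
    rw [← Real.mul_rpow (by positivity) hN1.le, div_mul_cancel₀ _ hN1.ne']
  rw [hmul] at hb2
  have hpow : ((N : ℝ) + 1) ^ q = ((N : ℝ) + 1) ^ (q - 1) * ((N : ℝ) + 1) := by
    rw [← Real.rpow_add_one hN1.ne']; ring_nf
  have key : ((N : ℝ) + 1) ^ q - q * ((N : ℝ) + 1) ^ (q - 1)
      = (1 + q * -(1 / ((N : ℝ) + 1))) * ((N : ℝ) + 1) ^ q := by
    rw [hpow]; field_simp; ring
  linarith [key ▸ hb2]

private lemma sum_rpow_ge (q : ℝ) (hq : 1 ≤ q) (N : ℕ) :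
    (N : ℝ) ^ q / q ≤ ∑ j ∈ Finset.range N, ((j : ℝ) + 1) ^ (q - 1) := by
  have hq0 : (0 : ℝ) < q := lt_of_lt_of_le one_pos hq
  induction N with
  | zero => simp [Real.zero_rpow hq0.ne']
  | succ N ih =>
    rw [Finset.sum_range_succ]
    have h := rpow_step q hq N
    have h2 : ((N : ℝ) + 1) ^ q / q - (N : ℝ) ^ q / q ≤ ((N : ℝ) + 1) ^ (q - 1) := by
      rw [div_sub_div_same, div_le_iff₀ hq0]
      linarith
    push_cast
    linarith

theorem stmt_9 (p : ℕ) (hp : 2 ≤ p) (κ : ℝ) (hκ0 : 0 < κ) (hκ1 : κ < 1)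
    (S : ℕ → ℕ) (hS : ∀ i : ℕ, S i = ⌊((i : ℝ) + 1) ^ (1 / κ - 1)⌋₊)
    (w : ℕ → ℕ) (hw : ∀ n, w n = ∏ i ∈ Finset.range n, (p ^ S i + p - 1))
    (n : ℕ → ℕ) (hn : ∀ m : ℕ, 2 ≤ m → w (n m - 1) < m ∧ m ≤ w (n m) ∧ 1 ≤ n m) :
    ∃ ε : ℕ → ℝ, Tendsto ε atTop (nhds 0) ∧
      ∀ᶠ m : ℕ in atTop,
        (n m : ℝ) ≤ ((1 + ε m) / (κ * Real.log p) * Real.log m) ^ κ := by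
  have hp1 : (1 : ℝ) < (p : ℝ) := by exact_mod_cast hp.trans_lt' one_lt_two
  have hlogp : 0 < Real.log p := Real.log_pos hp1
  have hq1 : (1 : ℝ) < 1 / κ := one_lt_one_div hκ0 hκ1
  set q : ℝ := 1 / κ with hqdef
  have hq : 1 ≤ q := hq1.le
  -- monotonicity of w
  have hwmono : Monotone w := by
    intro a b hab
    rw [hw, hw]
    refine Finset.prod_le_prod_of_subset_of_one_le' (Finset.range_subset_range.2 hab) ?_
    intro i _ _
    have h1 : 1 ≤ p ^ S i := Nat.one_le_pow _ _ (by omega)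
    omega
  -- n tends to infinity
  have hntop : Tendsto n atTop atTop := by
    rw [tendsto_atTop]
    intro b
    filter_upwards [eventually_ge_atTop (max 2 (w b + 1))] with m hm
    have hm2 : 2 ≤ m := le_trans (le_max_left _ _) hm
    obtain ⟨h1, h2, h3⟩ := hn m hm2
    by_contra hlt
    push_neg at hlt
    have h4 : m ≤ w b := le_trans h2 (hwmono hlt.le)
    have h5 := le_trans (le_max_right 2 (w b + 1)) hm
    omega
  have hnsub : Tendsto (fun m => n m - 1) atTop atTop :=
    tendsto_atTop.2 fun b => ((tendsto_atTop.1 hntop (b + 1)).mono fun m hm => by omega)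
  -- core log bound
  have hcore : ∀ m : ℕ, 2 ≤ m →
      Real.log p * (κ * ((n m - 1 : ℕ) : ℝ) ^ q - ((n m - 1 : ℕ) : ℝ)) ≤ Real.log m := by
    intro m hm
    obtain ⟨h1, h2, h3⟩ := hn m hm
    set k := n m - 1 with hk
    have hple : p ^ (∑ i ∈ Finset.range k, S i) ≤ w k := by
      rw [hw, ← Finset.prod_pow_eq_pow_sum]
      refine Finset.prod_le_prod' ?_
      intro i _
      have h1 : 1 ≤ p ^ S i := Nat.one_le_pow _ _ (by omega)
      omega
    have hlm : ((∑ i ∈ Finset.range k, S i : ℕ) : ℝ) * Real.log p ≤ Real.log m := by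
      have h4 : (p : ℝ) ^ (∑ i ∈ Finset.range k, S i) ≤ (m : ℝ) := by
        exact_mod_cast le_trans hple h1.le
      calc ((∑ i ∈ Finset.range k, S i : ℕ) : ℝ) * Real.log p
          = Real.log ((p : ℝ) ^ (∑ i ∈ Finset.range k, S i)) := (Real.log_pow _ _).symm
        _ ≤ Real.log m := Real.log_le_log (by positivity) h4
    have hsum : κ * (k : ℝ) ^ q - (k : ℝ) ≤ ((∑ i ∈ Finset.range k, S i : ℕ) : ℝ) := by
      push_cast
      have hfl : ∀ i ∈ Finset.range k, ((i : ℝ) + 1) ^ (q - 1) - 1 ≤ (S i : ℝ) := by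
        intro i _
        rw [hS i]
        exact (Nat.sub_one_lt_floor _).le
      have h5 := Finset.sum_le_sum hfl
      rw [Finset.sum_sub_distrib, Finset.sum_const, Finset.card_range] at h5
      have h6 := sum_rpow_ge q hq k
      have h7 : (k : ℝ) ^ q / q = κ * (k : ℝ) ^ q := by
        rw [hqdef]; field_simp
      simp only [nsmul_eq_mul, mul_one] at h5
      linarith
    calc Real.log p * (κ * (k : ℝ) ^ q - (k : ℝ))
        ≤ Real.log p * ((∑ i ∈ Finset.range k, S i : ℕ) : ℝ) :=
          mul_le_mul_of_nonneg_left hsum hlogp.le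
      _ = ((∑ i ∈ Finset.range k, S i : ℕ) : ℝ) * Real.log p := mul_comm _ _
      _ ≤ Real.log m := hlm
  -- the key eventual inequality, for any δ > 0
  have hkey : ∀ δ : ℝ, 0 < δ → ∀ᶠ m : ℕ in atTop,
      κ * Real.log p * ((n m : ℝ)) ^ q ≤ (1 + δ) * Real.log m := by
    intro δ hδ
    have t1 : Tendsto (fun k : ℕ => (1 + 1 / (k : ℝ)) ^ q) atTop (nhds ((1 : ℝ) ^ q)) := by
      have : Tendsto (fun k : ℕ => 1 + 1 / (k : ℝ)) atTop (nhds (1 + 0)) :=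
        tendsto_const_nhds.add tendsto_one_div_atTop_nhds_zero_nat
      rw [add_zero] at this
      exact this.rpow_const (Or.inl one_ne_zero)
    have t2 : Tendsto (fun k : ℕ => (k : ℝ) ^ (1 - q)) atTop (nhds 0) := by
      have h := (tendsto_rpow_neg_atTop (by linarith : (0 : ℝ) < q - 1)).comp
        tendsto_natCast_atTop_atTop (α := ℕ)
      simpa [neg_sub, Function.comp_def] using h
    have hA : Tendsto
        (fun k : ℕ => (1 + 1 / (k : ℝ)) ^ q - (1 + δ) * (1 - (k : ℝ) ^ (1 - q) / κ))
        atTop (nhds (-δ)) := by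
      have := t1.sub ((((t2.div_const κ).const_sub 1).const_mul (1 + δ)))
      have he : (1 : ℝ) ^ q - (1 + δ) * (1 - 0 / κ) = -δ := by
        rw [Real.one_rpow]; ring_nf
      rwa [he] at this
    have hPk : ∀ᶠ k : ℕ in atTop,
        κ * ((k : ℝ) + 1) ^ q ≤ (1 + δ) * (κ * (k : ℝ) ^ q - (k : ℝ)) := by
      filter_upwards [hA.eventually_lt_const (by linarith : -δ < 0),
        eventually_ge_atTop 1] with k hexpr hk1
      have hkpos : (0 : ℝ) < (k : ℝ) := by exact_mod_cast hk1
      have e1 : ((k : ℝ) + 1) ^ q = (1 + 1 / (k : ℝ)) ^ q * (k : ℝ) ^ q := by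
        rw [← Real.mul_rpow (by positivity) hkpos.le]
        congr 1
        field_simp
      have e2 : (k : ℝ) ^ (1 - q) * (k : ℝ) ^ q = (k : ℝ) := by
        rw [← Real.rpow_add hkpos]
        norm_num
      have hineq : (1 + 1 / (k : ℝ)) ^ q ≤ (1 + δ) * (1 - (k : ℝ) ^ (1 - q) / κ) := by
        linarith
      have hmul := mul_le_mul_of_nonneg_right hineq
        (by positivity : (0 : ℝ) ≤ κ * (k : ℝ) ^ q)
      have e3 : ((1 + δ) * (1 - (k : ℝ) ^ (1 - q) / κ)) * (κ * (k : ℝ) ^ q)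
          = (1 + δ) * (κ * (k : ℝ) ^ q - (k : ℝ) ^ (1 - q) * (k : ℝ) ^ q) := by
        field_simp
      rw [e3, e2] at hmul
      calc κ * ((k : ℝ) + 1) ^ q = (1 + 1 / (k : ℝ)) ^ q * (κ * (k : ℝ) ^ q) := by
            rw [e1]; ring
        _ ≤ (1 + δ) * (κ * (k : ℝ) ^ q - (k : ℝ)) := hmul
    filter_upwards [hnsub.eventually hPk, eventually_ge_atTop 2,
      hntop.eventually (eventually_ge_atTop 1)] with m hPm hm2 hnm1
    have hcm := hcore m hm2
    have hcast : ((n m : ℕ) : ℝ) = ((n m - 1 : ℕ) : ℝ) + 1 := by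
      push_cast [Nat.cast_sub hnm1]
      ring
    calc κ * Real.log p * ((n m : ℝ)) ^ q
        = Real.log p * (κ * (((n m - 1 : ℕ) : ℝ) + 1) ^ q) := by rw [hcast]; ring
      _ ≤ Real.log p * ((1 + δ) * (κ * ((n m - 1 : ℕ) : ℝ) ^ q - ((n m - 1 : ℕ) : ℝ))) :=
          mul_le_mul_of_nonneg_left hPm hlogp.le
      _ = (1 + δ) * (Real.log p * (κ * ((n m - 1 : ℕ) : ℝ) ^ q - ((n m - 1 : ℕ) : ℝ))) := by
          ring
      _ ≤ (1 + δ) * Real.log m := mul_le_mul_of_nonneg_left hcm (by linarith)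
  refine ⟨fun m => max 0 (κ * Real.log p * ((n m : ℝ)) ^ q / Real.log m - 1), ?_, ?_⟩
  · rw [NormedAddCommGroup.tendsto_nhds_zero]
    intro δ hδ
    filter_upwards [hkey (δ / 2) (by linarith), eventually_ge_atTop 2] with m hm hm2
    have hlogm : 0 < Real.log m := Real.log_pos (by exact_mod_cast hm2)
    have h7 : κ * Real.log p * ((n m : ℝ)) ^ q / Real.log m - 1 ≤ δ / 2 := by
      rw [sub_le_iff_le_add, div_le_iff₀ hlogm]
      linarith
    rw [Real.norm_of_nonneg (le_max_left _ _)]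
    have : max 0 (κ * Real.log p * ((n m : ℝ)) ^ q / Real.log m - 1) ≤ δ / 2 :=
      max_le (by linarith) h7
    linarith
  · filter_upwards [eventually_ge_atTop 2] with m hm2
    obtain ⟨h1, h2, h3⟩ := hn m hm2
    have hlogm : 0 < Real.log m := Real.log_pos (by exact_mod_cast hm2)
    have hklp : 0 < κ * Real.log p := by positivity
    set e : ℝ := max 0 (κ * Real.log p * ((n m : ℝ)) ^ q / Real.log m - 1) with he
    have h7 : κ * Real.log p * ((n m : ℝ)) ^ q / Real.log m ≤ 1 + e := by
      have := le_max_right (0 : ℝ) (κ * Real.log p * ((n m : ℝ)) ^ q / Real.log m - 1)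
      rw [← he] at this
      linarith
    have h5 : κ * Real.log p * ((n m : ℝ)) ^ q ≤ (1 + e) * Real.log m := by
      calc κ * Real.log p * ((n m : ℝ)) ^ q
          = (κ * Real.log p * ((n m : ℝ)) ^ q / Real.log m) * Real.log m := by
            field_simp
        _ ≤ (1 + e) * Real.log m := mul_le_mul_of_nonneg_right h7 hlogm.le
    have h6 : ((n m : ℝ)) ^ q ≤ (1 + e) / (κ * Real.log p) * Real.log m := by
      rw [div_mul_eq_mul_div, le_div_iff₀ hklp]
      linarith
    have h8 : (((n m : ℝ)) ^ q) ^ κ = (n m : ℝ) := by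
      rw [← Real.rpow_mul (Nat.cast_nonneg _), hqdef, one_div_mul_cancel hκ0.ne',
        Real.rpow_one]
    rw [← h8]
    exact Real.rpow_le_rpow (Real.rpow_nonneg (Nat.cast_nonneg _) q) h6 hκ0.le
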